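/- Fix an integer k ≥ 2 and let (y(n))_{n ≥ k+2} be the real sequence defined by y(k+2) = 2 and y(n+1) = 1 + (1 − k/(k·n − k² + 1))·y(n) for n ≥ k+2. Then the quantity |y(n) − n/2| is bounded uniformly in n; that is, there is a constant C (depending only on k) with |y(n) − n/2| ≤ C for all n ≥ k+2. -/

import Mathlib

/-- Fix an integer `k ≥ 2` and let `(y n)_{n ≥ k+2}` be the real sequence defined by
`y (k+2) = 2` and `y (n+1) = 1 + (1 − k/(k·n − k² + 1))·y n` for `n ≥ k+2`. Then
`|y n − n/2|` is bounded uniformly in `n`: there is a constant `C` with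
`|y n − n/2| ≤ C` for all `n ≥ k+2`. -/
theorem base_recurrence_linear_growth (k : ℕ) (hk : 2 ≤ k) (y : ℕ → ℝ)
    (hy0 : y (k + 2) = 2)
    (hy : ∀ n : ℕ, k + 2 ≤ n →
      y (n + 1) = 1 + (1 - (k : ℝ) / ((k : ℝ) * n - (k : ℝ) ^ 2 + 1)) * y n) :
    ∃ C : ℝ, ∀ n : ℕ, k + 2 ≤ n → |y n - (n : ℝ) / 2| ≤ C := by
  have hk2 : (2 : ℝ) ≤ (k : ℝ) := by exact_mod_cast hk
  set C : ℝ := max |y (k + 2) - ((k : ℝ) + 2) / 2| (((k : ℝ) ^ 2 - 1) / (2 * k)) with hC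
  refine ⟨C, ?_⟩
  intro n hn
  induction n, hn using Nat.le_induction with
  | base =>
      have : ((k + 2 : ℕ) : ℝ) = (k : ℝ) + 2 := by push_cast; ring
      rw [this]
      exact le_max_left _ _
  | succ n hn ih =>
      have hnR : ((k : ℝ) + 2) ≤ (n : ℝ) := by exact_mod_cast hn
      set D : ℝ := (k : ℝ) * n - (k : ℝ) ^ 2 + 1 with hD
      have hDpos : 0 < D := by nlinarith
      have hDk : (k : ℝ) < D := by nlinarith
      have hkpos : (0 : ℝ) < k := by linarith
      have ha0 : 0 < (k : ℝ) / D := div_pos hkpos hDpos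
      have ha1 : (k : ℝ) / D < 1 := (div_lt_one hDpos).mpr hDk
      have key : y (n + 1) - ((n + 1 : ℕ) : ℝ) / 2 =
          (1 - (k : ℝ) / D) * (y n - (n : ℝ) / 2) + (1 - (k : ℝ) ^ 2) / (2 * D) := by
        rw [hy n hn, ← hD]
        push_cast
        field_simp
        ring
      have habs : |y (n + 1) - ((n + 1 : ℕ) : ℝ) / 2| ≤
          (1 - (k : ℝ) / D) * |y n - (n : ℝ) / 2| + ((k : ℝ) ^ 2 - 1) / (2 * D) := by
        rw [key]
        calc |(1 - (k : ℝ) / D) * (y n - (n : ℝ) / 2) + (1 - (k : ℝ) ^ 2) / (2 * D)|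
            ≤ |(1 - (k : ℝ) / D) * (y n - (n : ℝ) / 2)| + |(1 - (k : ℝ) ^ 2) / (2 * D)| :=
              abs_add_le _ _
          _ = (1 - (k : ℝ) / D) * |y n - (n : ℝ) / 2| + ((k : ℝ) ^ 2 - 1) / (2 * D) := by
              rw [abs_mul, abs_of_nonneg (by linarith : (0:ℝ) ≤ 1 - (k : ℝ) / D),
                abs_div, abs_of_nonneg (by linarith : (0:ℝ) ≤ 2 * D),
                abs_of_nonpos (by nlinarith : (1 - (k : ℝ) ^ 2) ≤ 0)]
              ring_nf
      have hsub : ((k : ℝ) ^ 2 - 1) / (2 * D) = ((k : ℝ) / D) * (((k : ℝ) ^ 2 - 1) / (2 * k)) := by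
        field_simp
      have hCk : ((k : ℝ) ^ 2 - 1) / (2 * k) ≤ C := le_max_right _ _
      calc |y (n + 1) - ((n + 1 : ℕ) : ℝ) / 2|
          ≤ (1 - (k : ℝ) / D) * |y n - (n : ℝ) / 2| + ((k : ℝ) ^ 2 - 1) / (2 * D) := habs
        _ ≤ (1 - (k : ℝ) / D) * C + ((k : ℝ) / D) * C := by
            rw [hsub]
            gcongr
        _ = C := by ring
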